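/- The group U presented by generators {t^U : t ∈ T} with relations (t^U)^2 = 1 and t^U s^U (t^U)^{-1} = (t.s)^U for all s,t ∈ T, equipped with the action induced by the morphism to the terminal reflection group, is the initial T-reflection group: for every T-reflection group X there is a unique reflection morphism U → X. -/

import Mathlib

/-- A symmetric system: a set with a multiplication satisfying (S1) and (S2). -/
structure SymmetricSystem (T : Type*) where
  mul : T → T → T
  s1 : ∀ s t : T, mul s (mul s t) = t
  s2 : ∀ r s t : T, mul r (mul s t) = mul (mul r s) (mul r t)

/-- A `T`-reflection group: a group `X` acting on `T` together with a map `t ↦ t^X`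
satisfying axioms (G1)-(G4). -/
structure ReflectionGroup {T : Type*} (S : SymmetricSystem T) (X : Type*) [Group X] where
  act : X → T → T
  act_one : ∀ t : T, act 1 t = t
  act_mul : ∀ x y : X, ∀ t : T, act (x * y) t = act x (act y t)
  refl : T → X
  g1 : Subgroup.closure (Set.range refl) = ⊤
  g2 : ∀ s t : T, act (refl t) s = S.mul t s
  g3 : ∀ s t : T, refl t * refl s * (refl t)⁻¹ = refl (S.mul t s)
  g4 : ∀ t : T, refl t * refl t = 1


/-- The relations of the presentation by conjugation. -/
def conjRels {T : Type*} (S : SymmetricSystem T) : Set (FreeGroup T) :=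
  {w | (∃ t : T, w = FreeGroup.of t * FreeGroup.of t) ∨
       (∃ s t : T, w = FreeGroup.of t * FreeGroup.of s * (FreeGroup.of t)⁻¹ *
          (FreeGroup.of (S.mul t s))⁻¹)}

/-- The involution `s ↦ t.s` as a permutation of `T`. -/
def SymmetricSystem.perm {T : Type*} (S : SymmetricSystem T) (t : T) : Equiv.Perm T :=
  ⟨S.mul t, S.mul t, fun s => S.s1 t s, fun s => S.s1 t s⟩

lemma refl_relations {T : Type*} (S : SymmetricSystem T) {X : Type*} [Group X]
    (f : T → X) (h4 : ∀ t : T, f t * f t = 1)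
    (h3 : ∀ s t : T, f t * f s * (f t)⁻¹ = f (S.mul t s)) :
    ∀ r ∈ conjRels S, FreeGroup.lift f r = 1 := by
  rintro r (⟨t, rfl⟩ | ⟨s, t, rfl⟩) <;> simp [h4, h3]

lemma mk_rel_one {T : Type*} (S : SymmetricSystem T) {r : FreeGroup T} (hr : r ∈ conjRels S) :
    PresentedGroup.mk (conjRels S) r = 1 := by
  rw [PresentedGroup.mk_eq_one_iff]
  exact Subgroup.subset_normalClosure hr

/-- The group presented by generators `t^U (t ∈ T)` and relations `(t^U)² = 1`,
`t^U s^U (t^U)⁻¹ = (t.s)^U` is the initial `T`-reflection group: it carries a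
reflection-group structure with `refl t = of t`, and for every `T`-reflection group `X`
there is a unique reflection morphism from it to `X`. -/
theorem presentedGroup_initial_reflectionGroup
    {T : Type*} (S : SymmetricSystem T) :
    ∃ R : ReflectionGroup S (PresentedGroup (conjRels S)),
      (∀ t : T, R.refl t = PresentedGroup.of t) ∧
      (∀ (X : Type*) [Group X] (RX : ReflectionGroup S X),
        ∃! φ : PresentedGroup (conjRels S) →* X, ∀ t : T, φ (R.refl t) = RX.refl t) := by
  have hperm4 : ∀ t : T, S.perm t * S.perm t = 1 := by
    intro t; ext s; exact S.s1 t s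
  have hperm3 : ∀ s t : T, S.perm t * S.perm s * (S.perm t)⁻¹ = S.perm (S.mul t s) := by
    intro s t; ext x
    show S.mul t (S.mul s (S.mul t x)) = S.mul (S.mul t s) x
    rw [S.s2 t s (S.mul t x), S.s1 t x]
  set ψ : PresentedGroup (conjRels S) →* Equiv.Perm T :=
    PresentedGroup.toGroup (refl_relations S S.perm hperm4 hperm3)
  have hg4 : ∀ t : T, (PresentedGroup.of t : PresentedGroup (conjRels S)) *
      PresentedGroup.of t = 1 := by
    intro t
    have := mk_rel_one S (Or.inl ⟨t, rfl⟩)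
    simpa [PresentedGroup.of] using this
  have hg3 : ∀ s t : T, (PresentedGroup.of t : PresentedGroup (conjRels S)) *
      PresentedGroup.of s * (PresentedGroup.of t)⁻¹ = PresentedGroup.of (S.mul t s) := by
    intro s t
    have := mk_rel_one S (Or.inr ⟨s, t, rfl⟩)
    simp only [map_mul, map_inv] at this
    rw [mul_inv_eq_one] at this
    exact this
  refine ⟨{ act := fun x t => ψ x t
            act_one := by simp
            act_mul := by intro x y t; simp
            refl := PresentedGroup.of
            g1 := PresentedGroup.closure_range_of _
            g2 := by
              intro s t
              show ψ (PresentedGroup.of t) s = S.mul t s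
              rw [PresentedGroup.toGroup.of]
              rfl
            g3 := hg3
            g4 := hg4 }, fun t => rfl, ?_⟩
  intro X _ RX
  refine ⟨PresentedGroup.toGroup (refl_relations S RX.refl RX.g4 RX.g3),
    fun t => PresentedGroup.toGroup.of _, ?_⟩
  intro g hg
  ext x
  exact PresentedGroup.toGroup.unique _ g hg
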